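/- Let A be an endomorphism of a finite-dimensional real vector space and c < 0. If for every t ∈ ℝ the operator J(t) = cosh(√(−c) t)·I − (sinh(√(−c) t)/√(−c))·A is invertible, then every real eigenvalue of A lies in the closed interval [−√(−c), √(−c)]. -/
import Mathlib


/-- if `J(t) = cosh(√(−c) t)·I − (sinh(√(−c) t)/√(−c))·A` is invertible
for all `t ∈ ℝ` and `c < 0`, then every real eigenvalue of `A` lies in
`[−√(−c), √(−c)]`. -/
theorem stmt_3 {V : Type*} [AddCommGroup V] [Module ℝ V] [FiniteDimensional ℝ V]
    (A : Module.End ℝ V) (c : ℝ) (hc : c < 0)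
    (hJ : ∀ t : ℝ,
      IsUnit (Real.cosh (Real.sqrt (-c) * t) • (1 : Module.End ℝ V)
        - (Real.sinh (Real.sqrt (-c) * t) / Real.sqrt (-c)) • A)) :
    ∀ lam : ℝ, Module.End.HasEigenvalue A lam →
      lam ∈ Set.Icc (-Real.sqrt (-c)) (Real.sqrt (-c)) := by
  intro lam hlam
  by_contra h
  set s := Real.sqrt (-c) with hs_def
  have hs : 0 < s := Real.sqrt_pos.mpr (by linarith)
  have habs : s < |lam| := by
    simp only [Set.mem_Icc, not_and_or, not_le] at h
    rcases h with h | h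
    · rw [abs_of_neg (by linarith)]; linarith
    · rw [abs_of_pos (by linarith)]; linarith
  have hlam0 : lam ≠ 0 := by
    intro h0
    rw [h0, abs_zero] at habs; linarith
  set u := s / lam with hu_def
  have hu : |u| < 1 := by
    rw [hu_def, abs_div, abs_of_pos hs, div_lt_one (abs_pos.mpr hlam0)]
    exact habs
  obtain ⟨hul, hur⟩ := abs_lt.mp hu
  have h1u : 0 < 1 - u := by linarith
  have h2u : 0 < 1 + u := by linarith
  set x := Real.log ((1 + u) / (1 - u)) / 2 with hx_def
  have hE2 : Real.exp x * Real.exp x = (1 + u) / (1 - u) := by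
    rw [← Real.exp_add, show x + x = Real.log ((1 + u) / (1 - u)) by rw [hx_def]; ring,
      Real.exp_log (div_pos h2u h1u)]
  have hEpos : 0 < Real.exp x := Real.exp_pos x
  have hkey : Real.sinh x = u * Real.cosh x := by
    rw [Real.sinh_eq, Real.cosh_eq, Real.exp_neg]
    have hE2' : Real.exp x * Real.exp x * (1 - u) = 1 + u := by
      rw [hE2]; field_simp
    field_simp
    nlinarith [hE2']
  -- choose t := x / s
  set t := x / s with ht_def
  have hst : s * t = x := by
    rw [ht_def]; field_simp
  have hscalar : Real.cosh (s * t) - Real.sinh (s * t) / s * lam = 0 := by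
    rw [hst, hkey, hu_def]
    field_simp
    ring
  obtain ⟨v, hv⟩ := hlam.exists_hasEigenvector
  have hJv : (Real.cosh (s * t) • (1 : Module.End ℝ V)
      - (Real.sinh (s * t) / s) • A) v = 0 := by
    have hAv : A v = lam • v := hv.apply_eq_smul
    simp only [LinearMap.sub_apply, LinearMap.smul_apply, Module.End.one_apply, hAv,
      smul_smul]
    rw [← sub_smul]
    rw [show Real.cosh (s * t) - Real.sinh (s * t) / s * lam = 0 from hscalar, zero_smul]
  have hinj := ((Module.End.isUnit_iff _).mp (hJ t)).injective
  have : v = 0 := by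
    apply hinj
    simpa using hJv
  exact hv.right this
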